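/- Let q be a natural number and define f : ℝ → ℝ by f(x) = ∏_{n=0}^{q−1} (x − n). Then for every real x, (f'(x))² − f(x)·f''(x) = ∑_{α=0}^{q−1} ( ∏_{n ∈ {0,…,q−1}, n ≠ α} (x − n) )²; in particular this difference is a sum of squares and hence nonnegative for all x. -/

import Mathlib

lemma deriv_prod_aux (s : Finset ℕ) :
    deriv (fun y : ℝ => ∏ n ∈ s, (y - (n : ℝ))) =
      fun y => ∑ α ∈ s, ∏ n ∈ s.erase α, (y - (n : ℝ)) := by
  funext y
  have h := deriv_fun_finsetProd (u := s) (f := fun n (y : ℝ) => y - (n : ℝ)) (x := y)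
    (fun i _ => by fun_prop)
  rw [h]
  refine Finset.sum_congr rfl fun α hα => ?_
  have : deriv (fun y : ℝ => y - (α : ℝ)) y = 1 := by
    simp [deriv_sub_const]
  rw [this, smul_eq_mul, mul_one]

/-- Sum-of-squares identity for the falling-factorial polynomial
`f(x) = ∏_{n=0}^{q-1} (x - n)`:
`(f'(x))² - f(x) f''(x) = ∑_{α=0}^{q-1} (∏_{n ≠ α} (x - n))²`, and in particular this
difference is nonnegative for all `x`. -/
theorem stmt7 (q : ℕ) (f : ℝ → ℝ)
    (hf : f = fun x => ∏ n ∈ Finset.range q, (x - (n : ℝ))) (x : ℝ) :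
    (deriv f x) ^ 2 - f x * deriv (deriv f) x =
        ∑ α ∈ Finset.range q, (∏ n ∈ (Finset.range q).erase α, (x - (n : ℝ))) ^ 2 ∧
      0 ≤ (deriv f x) ^ 2 - f x * deriv (deriv f) x := by
  have hd1 : deriv f = fun y => ∑ α ∈ Finset.range q,
      ∏ n ∈ (Finset.range q).erase α, (y - (n : ℝ)) := by
    rw [hf]; exact deriv_prod_aux _
  have hd2 : deriv (deriv f) x = ∑ α ∈ Finset.range q,
      ∑ β ∈ ((Finset.range q).erase α),
        ∏ n ∈ ((Finset.range q).erase α).erase β, (x - (n : ℝ)) := by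
    rw [hd1]
    rw [deriv_fun_sum (fun α _ => by fun_prop)]
    refine Finset.sum_congr rfl fun α hα => ?_
    have := deriv_prod_aux ((Finset.range q).erase α)
    exact congrFun this x
  set P : ℕ → ℝ := fun α => ∏ n ∈ (Finset.range q).erase α, (x - (n : ℝ)) with hP
  have key : ∀ α ∈ Finset.range q, ∀ β ∈ (Finset.range q).erase α,
      P α * P β = f x * ∏ n ∈ ((Finset.range q).erase α).erase β, (x - (n : ℝ)) := by
    intro α hα β hβ
    have h1 : P α = (x - (β : ℝ)) * ∏ n ∈ ((Finset.range q).erase α).erase β, (x - (n : ℝ)) :=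
      (Finset.mul_prod_erase _ _ hβ).symm
    have h2 : f x = (x - (β : ℝ)) * P β := by
      rw [hf]
      exact (Finset.mul_prod_erase _ _ (Finset.mem_of_mem_erase hβ)).symm
    rw [h1, h2]; ring
  have hmain : (deriv f x) ^ 2 - f x * deriv (deriv f) x =
      ∑ α ∈ Finset.range q, (P α) ^ 2 := by
    rw [hd2, hd1]
    simp only [← hP]
    rw [sq, Finset.sum_mul_sum, Finset.mul_sum]
    have : ∀ α ∈ Finset.range q,
        ∑ β ∈ Finset.range q, P α * P β =
          P α ^ 2 + f x * ∑ β ∈ (Finset.range q).erase α,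
            ∏ n ∈ ((Finset.range q).erase α).erase β, (x - (n : ℝ)) := by
      intro α hα
      rw [← Finset.add_sum_erase _ _ hα, Finset.mul_sum]
      rw [Finset.sum_congr rfl (key α hα), sq]
    rw [Finset.sum_congr rfl this, Finset.sum_add_distrib]
    ring
  exact ⟨hmain, hmain ▸ Finset.sum_nonneg fun α _ => sq_nonneg _⟩
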